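/- Let G be a finite abelian group of order N containing a subgroup isomorphic to the Klein four-group. Then for every f ∈ ℂ^G, the Gabor frame (f, G × Ĝ) is spark deficient; moreover there are at least 3N/2 pairs (a,ξ) ∈ G × Ĝ such that M_ξ T_a f is orthogonal to conj(f), so ‖V_f conj(f)‖₀ ≤ N² − 3N/2. -/

import Mathlib

open Finset

lemma vanish_aux {G : Type*} [AddCommGroup G] [Fintype G] (f : G → ℂ) (a : G)
    (ha : a + a = 0) (ξ : AddChar G ℂ) (hξ : ξ a = -1) :
    ∑ g : G, (ξ g * f (g - a)) * f g = 0 := by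
  have hneg : -a = a := neg_eq_of_add_eq_zero_left ha
  set T := ∑ g : G, (ξ g * f (g - a)) * f g with hT
  have key : T = -T := by
    calc T = ∑ g : G, (ξ (g + a) * f ((g + a) - a)) * f (g + a) :=
          (Fintype.sum_equiv (Equiv.addRight a) _ _ (fun g => rfl)).symm
      _ = ∑ g : G, -((ξ g * f (g - a)) * f g) := by
          refine Finset.sum_congr rfl fun g _ => ?_
          have h1 : (g + a) - a = g := by abel
          have h2 : g + a = g - a := by rw [sub_eq_add_neg, hneg]
          rw [h1, AddChar.map_add_eq_mul, hξ, h2]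
          ring
      _ = -T := by rw [hT, Finset.sum_neg_distrib]
  have h2 : (2 : ℂ) * T = 0 := by linear_combination key
  rcases mul_eq_zero.mp h2 with h | h
  · exact absurd h two_ne_zero
  · exact h

lemma half_count_aux {G : Type*} [AddCommGroup G] [Fintype G] (a : G)
    (ha2 : a + a = 0) (ha : a ≠ 0) :
    Fintype.card G ≤ 2 * (univ.filter fun ξ : AddChar G ℂ => ξ a = -1).card := by
  classical
  have dich : ∀ ξ : AddChar G ℂ, ξ a = 1 ∨ ξ a = -1 := by
    intro ξ
    have hsq : ξ a * ξ a = 1 := by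
      rw [← AddChar.map_add_eq_mul, ha2, AddChar.map_zero_eq_one]
    have h : (ξ a - 1) * (ξ a + 1) = 0 := by linear_combination hsq
    rcases mul_eq_zero.mp h with h | h
    · left; linear_combination h
    · right; linear_combination h
  obtain ⟨ξ₀, hξ₀⟩ := AddChar.exists_apply_ne_zero.mpr ha
  have hξ₀' : ξ₀ a = -1 := (dich ξ₀).resolve_left hξ₀
  have hne : ∀ (ξ : AddChar G ℂ) (x : G), ξ x ≠ 0 := by
    intro ξ x
    have h1 : ξ x * ξ (-x) = 1 := by
      rw [← AddChar.map_add_eq_mul, add_neg_cancel, AddChar.map_zero_eq_one]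
    exact left_ne_zero_of_mul_eq_one h1
  have hinj : Function.Injective (fun ξ : AddChar G ℂ => ξ₀ + ξ) := by
    intro ξ χ h
    ext x
    have := DFunLike.congr_fun h x
    simp only [AddChar.add_apply] at this
    exact mul_left_cancel₀ (hne ξ₀ x) this
  have hcard : (univ.filter fun ξ : AddChar G ℂ => ¬ ξ a = -1).card ≤
      (univ.filter fun ξ : AddChar G ℂ => ξ a = -1).card := by
    apply Finset.card_le_card_of_injOn (fun ξ => ξ₀ + ξ)
    · intro ξ hξ
      simp only [Finset.mem_filter, Finset.mem_univ, true_and] at hξ ⊢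
      have h1 : ξ a = 1 := (dich ξ).resolve_right (by simpa using hξ)
      simp [AddChar.add_apply, hξ₀', h1]
    · exact hinj.injOn
  have htot : (univ.filter fun ξ : AddChar G ℂ => ξ a = -1).card +
      (univ.filter fun ξ : AddChar G ℂ => ¬ ξ a = -1).card = Fintype.card (AddChar G ℂ) :=
    Finset.card_filter_add_card_filter_not _
  rw [AddChar.card_eq] at htot
  omega



/-- The time–frequency shift `π(x,ξ) f = M_ξ T_x f` of a window `f`. -/
def timeFreqShift {G : Type*} [AddCommGroup G] (p : G × AddChar G ℂ)
    (f : G → ℂ) : G → ℂ :=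
  fun g => p.2 g * f (g - p.1)

/-- The Gabor system `(f, G × Ĝ)` is full spark: every `|G|` of its vectors are
linearly independent. -/
def GaborFullSpark {G : Type*} [AddCommGroup G] [Fintype G] (f : G → ℂ) : Prop :=
  ∀ Λ : Finset (G × AddChar G ℂ), Λ.card = Fintype.card G →
    LinearIndependent ℂ (fun p : Λ => timeFreqShift (p : G × AddChar G ℂ) f)

/-- If `G` (of order `N`) contains a Klein four-subgroup, then every Gabor frame
`(f, G × Ĝ)` is spark deficient; moreover at least `3N/2` of the time–frequency
translates `M_ξ T_a f` are orthogonal to `conj f`, so that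
`‖V_f (conj f)‖₀ ≤ N² - 3N/2`. -/
theorem gabor_sparkDeficient_of_klein_subgroup {G : Type*} [AddCommGroup G]
    [Fintype G] (K : AddSubgroup G) (hK : Nonempty (K ≃+ (ZMod 2 × ZMod 2)))
    (f : G → ℂ) :
    ¬ GaborFullSpark f ∧
      3 * Fintype.card G ≤
        2 * Nat.card {p : G × AddChar G ℂ //
          ∑ g : G, (p.2 g * f (g - p.1)) * (starRingEnd ℂ) ((starRingEnd ℂ) (f g)) = 0} ∧
      2 * Nat.card {p : G × AddChar G ℂ //
          ∑ g : G, (p.2 g * f (g - p.1)) * (starRingEnd ℂ) ((starRingEnd ℂ) (f g)) ≠ 0} ≤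
        2 * (Fintype.card G) ^ 2 - 3 * Fintype.card G := by
  classical
  obtain ⟨e⟩ := hK
  set N := Fintype.card G with hN
  -- the predicate
  set C : G × AddChar G ℂ → Prop := fun p =>
    ∑ g : G, (p.2 g * f (g - p.1)) * (starRingEnd ℂ) ((starRingEnd ℂ) (f g)) = 0 with hC
  have hCsimp : ∀ p : G × AddChar G ℂ,
      C p ↔ ∑ g : G, (p.2 g * f (g - p.1)) * f g = 0 := by
    intro p
    simp [hC, Complex.conj_conj]
  -- elements of K double to zero
  have hzmod : ∀ z : ZMod 2 × ZMod 2, z + z = 0 := by decide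
  have hdouble : ∀ x ∈ K, x + x = 0 := by
    intro x hx
    have h1 : e (⟨x, hx⟩ + ⟨x, hx⟩) = 0 := by rw [map_add]; exact hzmod _
    have h2 : (⟨x, hx⟩ + ⟨x, hx⟩ : K) = 0 := by
      apply e.injective; rw [h1, map_zero]
    exact congrArg Subtype.val h2
  -- the three nonzero elements of K
  let u : ZMod 2 × ZMod 2 → G := fun z => ((e.symm z : K) : G)
  have huK : ∀ z, u z ∈ K := fun z => (e.symm z).2
  have huinj : Function.Injective u := by
    intro z w h
    have : (e.symm z : K) = e.symm w := Subtype.val_injective h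
    exact e.symm.injective this
  have hune : ∀ z : ZMod 2 × ZMod 2, z ≠ 0 → u z ≠ 0 := by
    intro z hz h0
    have h1 : (e.symm z : K) = 0 := ZeroMemClass.coe_eq_zero.mp h0
    exact hz (by simpa using congrArg e h1)
  let A : Finset G := {u (1, 0), u (0, 1), u (1, 1)}
  have hAcard : A.card = 3 := by
    refine Finset.card_eq_three.mpr ⟨_, _, _, ?_, ?_, ?_, rfl⟩
    · exact fun h => by exact absurd (huinj h) (by decide)
    · exact fun h => by exact absurd (huinj h) (by decide)
    · exact fun h => by exact absurd (huinj h) (by decide)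
  have hAK : ∀ a ∈ A, a ∈ K ∧ a ≠ 0 := by
    intro a ha
    simp only [A, Finset.mem_insert, Finset.mem_singleton] at ha
    rcases ha with rfl | rfl | rfl
    · exact ⟨huK _, hune _ (by decide)⟩
    · exact ⟨huK _, hune _ (by decide)⟩
    · exact ⟨huK _, hune _ (by decide)⟩
  -- character filter
  let T : G → Finset (AddChar G ℂ) := fun a => Finset.univ.filter fun ξ => ξ a = -1
  let Q : Finset (G × AddChar G ℂ) := A.biUnion fun a => {a} ×ˢ T a
  have hQcard' : Q.card = ∑ a ∈ A, (T a).card := by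
    rw [Finset.card_biUnion]
    · exact Finset.sum_congr rfl fun a _ => by
        rw [Finset.card_product, Finset.card_singleton, one_mul]
    · intro a _ b _ hab
      rw [Function.onFun, Finset.disjoint_left]
      intro p hp hp'
      simp only [Finset.mem_product, Finset.mem_singleton] at hp hp'
      exact hab (hp.1 ▸ hp'.1 ▸ rfl)
  have hlow : 3 * N ≤ 2 * Q.card := by
    have h1 : ∀ a ∈ A, N ≤ 2 * (T a).card := by
      intro a ha
      exact half_count_aux a (hdouble a (hAK a ha).1) (hAK a ha).2
    calc 3 * N = ∑ _a ∈ A, N := by rw [Finset.sum_const, hAcard]; ring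
      _ ≤ ∑ a ∈ A, 2 * (T a).card := Finset.sum_le_sum h1
      _ = 2 * Q.card := by rw [hQcard', Finset.mul_sum]
  -- Q consists of vanishing pairs
  set P : Finset (G × AddChar G ℂ) := Finset.univ.filter C with hP
  have hQP : Q ⊆ P := by
    intro p hp
    simp only [Q, Finset.mem_biUnion, Finset.mem_product, Finset.mem_singleton] at hp
    obtain ⟨a, haA, hpa, hpT⟩ := hp
    simp only [T, Finset.mem_filter, Finset.mem_univ, true_and] at hpT
    simp only [hP, Finset.mem_filter, Finset.mem_univ, true_and]
    rw [hCsimp]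
    subst hpa
    exact vanish_aux f p.1 (hdouble _ (hAK _ haA).1) p.2 hpT
  have hlowP : 3 * N ≤ 2 * P.card := hlow.trans (by
    have := Finset.card_le_card hQP; omega)
  -- identify Nat.card with Finset card
  have hcard0 : Nat.card {p : G × AddChar G ℂ // C p} = P.card := by
    rw [Nat.card_eq_fintype_card, Fintype.card_subtype]
  have hcard1 : Nat.card {p : G × AddChar G ℂ // ¬ C p} =
      (Finset.univ.filter fun p => ¬ C p).card := by
    rw [Nat.card_eq_fintype_card, Fintype.card_subtype]
  have htot : P.card + (Finset.univ.filter fun p => ¬ C p).card =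
      Fintype.card (G × AddChar G ℂ) := Finset.card_filter_add_card_filter_not _
  have hNN : Fintype.card (G × AddChar G ℂ) = N * N := by
    rw [Fintype.card_prod, AddChar.card_eq]
  refine ⟨?_, ?_, ?_⟩
  · -- not full spark
    intro hFS
    have hPN : N ≤ P.card := by omega
    obtain ⟨Λ, hΛP, hΛcard⟩ := Finset.exists_subset_card_eq hPN
    have hli := hFS Λ hΛcard
    by_cases hf : f = 0
    · have hpos : 0 < Λ.card := by
        rw [hΛcard]; exact Fintype.card_pos
      obtain ⟨p₀, hp₀⟩ := Finset.card_pos.mp hpos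
      exact hli.ne_zero ⟨p₀, hp₀⟩ (funext fun g => by simp [timeFreqShift, hf])
    · obtain ⟨g₀, hg₀⟩ := Function.ne_iff.mp hf
      simp only [Pi.zero_apply] at hg₀
      let φ : (G → ℂ) →ₗ[ℂ] ℂ :=
        { toFun := fun v => ∑ g : G, v g * f g
          map_add' := fun u v => by simp [add_mul, Finset.sum_add_distrib]
          map_smul' := fun c v => by simp [Finset.mul_sum, mul_assoc] }
      have hφval : φ (Pi.single g₀ 1) = f g₀ := by
        simp only [φ, LinearMap.coe_mk, AddHom.coe_mk]
        rw [Finset.sum_eq_single g₀]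
        · simp
        · intro b _ hb; simp [Pi.single_eq_of_ne hb]
        · simp
      have hφ0 : φ ≠ 0 := by
        intro h; rw [h] at hφval; simp at hφval; exact hg₀ hφval.symm
      have hker : ∀ p : Λ, timeFreqShift (p : G × AddChar G ℂ) f ∈ LinearMap.ker φ := by
        intro p
        have hpP := hΛP p.2
        simp only [hP, Finset.mem_filter, Finset.mem_univ, true_and] at hpP
        rw [hCsimp] at hpP
        simpa [LinearMap.mem_ker, φ, timeFreqShift] using hpP
      let w : Λ → LinearMap.ker φ := fun p =>
        ⟨timeFreqShift (p : G × AddChar G ℂ) f, hker p⟩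
      have hliw : LinearIndependent ℂ w :=
        LinearIndependent.of_comp (LinearMap.ker φ).subtype hli
      have h1 : Fintype.card Λ ≤ Module.finrank ℂ (LinearMap.ker φ) :=
        hliw.fintype_card_le_finrank
      have h2 : Module.finrank ℂ (LinearMap.ker φ) < Module.finrank ℂ (G → ℂ) :=
        Submodule.finrank_lt (fun h => hφ0 (LinearMap.ker_eq_top.mp h))
      rw [Module.finrank_fintype_fun_eq_card] at h2
      rw [Fintype.card_coe, hΛcard] at h1
      omega
  · rw [hcard0]; exact hlowP
  · rw [hcard1, pow_two]
    rw [hNN] at htot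
    generalize hM : N * N = M at htot ⊢
    omega
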